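/- If I ⊆ [0,1] and J ⊆ ℝ satisfy the DCC and t ≥ 0, then the set {a + t·b : a ∈ I, b ∈ J, b ≥ 0} satisfies the DCC. More generally, if (t_i) is a nondecreasing sequence of nonnegative reals and a_i ∈ I, b_i ∈ J with b_i ≥ 0, then the sequence (a_i + t_i·b_i) has a nondecreasing subsequence whose entries a, b, t can be taken monotone. -/

import Mathlib

/-- `S` satisfies the DCC: every nonincreasing sequence in `S` is eventually constant. -/
def SatisfiesDCC (S : Set ℝ) : Prop :=
  ∀ f : ℕ → ℝ, (∀ i, f i ∈ S) → Antitone f → ∃ N, ∀ n, N ≤ n → f n = f N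

lemma SatisfiesDCC.isPWO {S : Set ℝ} (h : SatisfiesDCC S) : S.IsPWO := by
  refine Set.IsWF.isPWO (Set.isWF_iff_no_descending_seq.2 fun f hf hmem => ?_)
  obtain ⟨N, hN⟩ := h f (fun i => hmem i) hf.antitone
  exact absurd (hN (N + 1) (Nat.le_succ N)) (ne_of_lt (hf (Nat.lt_succ_self N)))

lemma exists_mono_subseq {S : Set ℝ} (h : SatisfiesDCC S) (f : ℕ → ℝ)
    (hf : ∀ i, f i ∈ S) : ∃ φ : ℕ → ℕ, StrictMono φ ∧ Monotone (f ∘ φ) := by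
  obtain ⟨g, hg⟩ := h.isPWO.exists_monotone_subseq hf
  exact ⟨g, g.strictMono, hg⟩

/-- If `I ⊆ [0,1]` and `J ⊆ ℝ≥0` satisfy the DCC, then for fixed `t ≥ 0` the set
`{a + t·b : a ∈ I, b ∈ J}` satisfies the DCC; moreover, for any nondecreasing
nonnegative sequence `(t i)` and any `a i ∈ I`, `b i ∈ J`, there is a subsequence
along which `a`, `b`, `t` and `a + t·b` are all monotone (nondecreasing). -/
theorem dcc_sum_scaled (I J : Set ℝ) (hI : I ⊆ Set.Icc 0 1)
    (hJ : J ⊆ {x : ℝ | 0 ≤ x}) (hIdcc : SatisfiesDCC I) (hJdcc : SatisfiesDCC J) :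
    (∀ t : ℝ, 0 ≤ t →
      SatisfiesDCC {x : ℝ | ∃ a ∈ I, ∃ b ∈ J, x = a + t * b}) ∧
    (∀ (t a b : ℕ → ℝ), Monotone t → (∀ i, 0 ≤ t i) →
      (∀ i, a i ∈ I) → (∀ i, b i ∈ J) →
      ∃ φ : ℕ → ℕ, StrictMono φ ∧ Monotone (a ∘ φ) ∧ Monotone (b ∘ φ) ∧
        Monotone (t ∘ φ) ∧ Monotone (fun k => a (φ k) + t (φ k) * b (φ k))) := by
  have key : ∀ (t a b : ℕ → ℝ), Monotone t → (∀ i, 0 ≤ t i) →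
      (∀ i, a i ∈ I) → (∀ i, b i ∈ J) →
      ∃ φ : ℕ → ℕ, StrictMono φ ∧ Monotone (a ∘ φ) ∧ Monotone (b ∘ φ) ∧
        Monotone (t ∘ φ) ∧ Monotone (fun k => a (φ k) + t (φ k) * b (φ k)) := by
    intro t a b ht ht0 ha hb
    obtain ⟨φ₁, hφ₁, hmono₁⟩ := exists_mono_subseq hIdcc a ha
    obtain ⟨φ₂, hφ₂, hmono₂⟩ := exists_mono_subseq hJdcc (b ∘ φ₁) (fun i => hb _)
    refine ⟨φ₁ ∘ φ₂, hφ₁.comp hφ₂, hmono₁.comp hφ₂.monotone, hmono₂,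
      ht.comp (hφ₁.comp hφ₂).monotone, ?_⟩
    intro i j hij
    have h1 : a (φ₁ (φ₂ i)) ≤ a (φ₁ (φ₂ j)) := hmono₁ (hφ₂.monotone hij)
    have h2 : b (φ₁ (φ₂ i)) ≤ b (φ₁ (φ₂ j)) := hmono₂ hij
    have h3 : t (φ₁ (φ₂ i)) ≤ t (φ₁ (φ₂ j)) := ht ((hφ₁.comp hφ₂).monotone hij)
    have hb0 : (0:ℝ) ≤ b (φ₁ (φ₂ i)) := hJ (hb _)
    have := mul_le_mul h3 h2 hb0 (ht0 _)
    simp only [Function.comp]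
    linarith
  refine ⟨fun t ht => ?_, key⟩
  intro f hf hanti
  choose a ha b hb hfab using hf
  obtain ⟨φ, hφ, hma, hmb, -, hmf⟩ := key (fun _ => t) a b monotone_const
    (fun _ => ht) ha hb
  have hconstφ : ∀ k, f (φ k) = f (φ 0) := by
    intro k
    have h1 : f (φ k) ≤ f (φ 0) := hanti (Nat.zero_le k |> hφ.monotone)
    have h2 : f (φ 0) ≤ f (φ k) := by
      have := hmf (Nat.zero_le k)
      simpa [hfab] using this
    linarith
  refine ⟨φ 0, fun n hn => ?_⟩
  have h1 : f n ≤ f (φ 0) := hanti hn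
  have h2 : f (φ n) ≤ f n := hanti hφ.le_apply
  rw [hconstφ n] at h2
  linarith
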